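/- Let N ≥ 1 and for A = 1,…,N define the unit vectors a_A := (cos((A − 1/2)·π/N), sin((A − 1/2)·π/N)) in ℝ². Then for every unit vector u ∈ ℝ² there exists A ∈ {1,…,N} with |⟪a_A, u⟫| ≥ cos(π/(2N)). -/

import Mathlib

open Real

/-- The measurement direction `a_A = (cos((A − 1/2)·π/N), sin((A − 1/2)·π/N))` in the plane. -/
noncomputable def measDir (N A : ℕ) : EuclideanSpace ℝ (Fin 2) :=
  WithLp.toLp 2 fun (i : Fin 2) => if i = 0 then Real.cos (((A : ℝ) - 1 / 2) * Real.pi / N)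
           else Real.sin (((A : ℝ) - 1 / 2) * Real.pi / N)

/-- The geometric fact underlying the Leggett-model bound `I_N ≥ cos(π/(2N))`: for the `N`
measurement directions `a_A`, `A = 1, …, N`, spaced at angular intervals `π/N`, every unit
vector `u` in the plane satisfies `|⟪a_A, u⟫| ≥ cos(π/(2N))` for some setting `A`. -/
theorem exists_direction_close (N : ℕ) (hN : 1 ≤ N) :
    ∀ u : EuclideanSpace ℝ (Fin 2), ‖u‖ = 1 →
      ∃ A ∈ Finset.Icc 1 N,
        Real.cos (Real.pi / (2 * N)) ≤ |(inner ℝ (measDir N A) u : ℝ)| := by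
  intro u hu
  have hNR : (0 : ℝ) < N := by exact_mod_cast hN
  have hπ := Real.pi_pos
  set x := u 0 with hxdef
  set y := u 1 with hydef
  have hxy : x ^ 2 + y ^ 2 = 1 := by
    rw [EuclideanSpace.norm_eq, Real.sqrt_eq_one] at hu
    simpa [Fin.sum_univ_two, sq_abs] using hu
  have hx1 : -1 ≤ x := by nlinarith
  have hx2 : x ≤ 1 := by nlinarith
  set θ := if 0 ≤ y then Real.arccos x else -Real.arccos x with hθdef
  have hcos : Real.cos θ = x := by
    rw [hθdef]; split_ifs <;> simp [Real.cos_arccos hx1 hx2]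
  have hsin : Real.sin θ = y := by
    rw [hθdef]; split_ifs with h
    · rw [Real.sin_arccos, show 1 - x ^ 2 = y ^ 2 by linarith, Real.sqrt_sq_eq_abs,
        abs_of_nonneg h]
    · rw [Real.sin_neg, Real.sin_arccos, show 1 - x ^ 2 = y ^ 2 by linarith,
        Real.sqrt_sq_eq_abs, abs_of_neg (lt_of_not_ge h)]; ring
  clear_value x y
  clear_value θ
  set k : ℤ := ⌊θ / π⌋ with hkdef
  set t := θ - k * π with htdef
  have ht0 : 0 ≤ t := by
    have h1 : (k : ℝ) * π ≤ θ := (le_div_iff₀ hπ).mp (Int.floor_le (θ / π))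
    rw [htdef]; linarith
  have ht1 : t < π := by
    have h2 : θ < ((k : ℝ) + 1) * π := (div_lt_iff₀ hπ).mp (Int.lt_floor_add_one (θ / π))
    rw [htdef]; nlinarith
  clear_value k
  clear_value t
  set s := t * N / π with hsdef
  have hs0 : 0 ≤ s := by positivity
  have hsN : s < N := by
    rw [hsdef, div_lt_iff₀ hπ]; nlinarith
  set m : ℤ := ⌊s⌋ with hmdef
  clear_value s
  have hm0 : 0 ≤ m := Int.le_floor.2 (by exact_mod_cast hs0)
  have hms : (m : ℝ) ≤ s := Int.floor_le s
  have hms2 : s < m + 1 := Int.lt_floor_add_one s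
  clear_value m
  refine ⟨m.toNat + 1, ?_, ?_⟩
  · rw [Finset.mem_Icc]
    constructor
    · omega
    · have : (m : ℝ) < (N : ℝ) := lt_of_le_of_lt hms hsN
      have hmN : m < (N : ℤ) := by exact_mod_cast this
      omega
  · set A := m.toNat + 1 with hAdef
    have hAcast : (A : ℝ) = (m : ℝ) + 1 := by
      have : ((m.toNat : ℤ) : ℝ) = (m : ℝ) := by rw [Int.toNat_of_nonneg hm0]
      push_cast [hAdef]
      push_cast at this
      linarith
    set φ := ((A : ℝ) - 1 / 2) * π / N with hφdef
    clear_value A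
    have hts : t = s * π / N := by
      rw [hsdef]; field_simp
    have hφt : φ - t = ((m : ℝ) + 1 / 2 - s) * (π / N) := by
      rw [hφdef, hAcast, hts]; field_simp; ring
    have hq : (0:ℝ) ≤ π / N := le_of_lt (div_pos hπ hNR)
    have he : π / (2 * (N:ℝ)) = (1 / 2) * (π / N) := by ring
    have habs : |φ - t| ≤ π / (2 * N) := by
      rw [hφt, abs_le, he]
      constructor
      · nlinarith [mul_le_mul_of_nonneg_right (show -(1/2:ℝ) ≤ (m:ℝ) + 1/2 - s by linarith) hq]
      · nlinarith [mul_le_mul_of_nonneg_right (show (m:ℝ) + 1/2 - s ≤ 1/2 by linarith) hq]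
    have hkey : |Real.cos (φ - θ)| = |Real.cos (φ - t)| := by
      have : φ - θ = φ - t - k * π := by rw [htdef]; ring
      have h1 : |(-1 : ℝ) ^ k| = 1 := by
        rcases Int.even_or_odd k with h | h
        · rw [h.neg_one_zpow, abs_one]
        · rw [h.neg_one_zpow, abs_neg, abs_one]
      rw [this, Real.cos_sub_int_mul_pi, abs_mul, h1, one_mul]
    have hinner : (inner ℝ (measDir N A) u : ℝ) = Real.cos φ * x + Real.sin φ * y := by
      simp [measDir, PiLp.inner_apply, Fin.sum_univ_two, RCLike.inner_apply, hφdef, hxdef, hydef]; ring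
    have hinner2 : (inner ℝ (measDir N A) u : ℝ) = Real.cos (φ - θ) := by
      rw [hinner, Real.cos_sub, hcos, hsin]
    rw [hinner2, hkey]
    have h1 : Real.cos (π / (2 * N)) ≤ Real.cos |φ - t| := by
      apply Real.cos_le_cos_of_nonneg_of_le_pi (abs_nonneg _) _ habs
      have hNR1 : (1:ℝ) ≤ N := by exact_mod_cast hN
      exact div_le_self hπ.le (by linarith)
    calc Real.cos (π / (2 * N)) ≤ Real.cos |φ - t| := h1
      _ = Real.cos (φ - t) := Real.cos_abs _
      _ ≤ |Real.cos (φ - t)| := le_abs_self _
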